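/- arXiv:math/0305348 — 2 statements merged into one kernel-verified Lean document; each statement's English description precedes it below -/
import Mathlib

section
/- Let (a_n) be defined by a_0 = 4 and, for n ≥ 1, a_n = min{ |d − p_n/d| : d divides p_n and |d − p_n/d| > 1 }, where p_n = a_0·a_1···a_{n−1}. Let (b_n) be defined by b_1 = 1 and, for n ≥ 2, b_n = ⌈(1/2)·(b_1 + b_2 + ... + b_{n−1})⌉. Then for every n > 2, a_n = 2^{b_n}. -/
lemma key_ineq (e i : ℕ) (he : 4 ≤ e) (hi : i ≤ e) :
    (2:ℤ)^((e-1)/2) ≤ |(3:ℤ) * 2^i - 2^(e-i)| := by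
  have hmono : ∀ {m n : ℕ}, m ≤ n → (2:ℤ)^m ≤ 2^n :=
    fun h => pow_le_pow_right₀ (by norm_num) h
  by_cases h1 : 2*i + 3 ≤ e
  · -- e - i ≥ i + 3
    have h3 : (3:ℤ)*2^i + 2^((e-1)/2) ≤ 2^(e-i) := by
      have ha : (3:ℤ)*2^i ≤ 2^(e-i-1) := by
        calc (3:ℤ)*2^i ≤ 4*2^i := by nlinarith [pow_pos (by norm_num : (0:ℤ)<2) i]
          _ = 2^(i+2) := by ring
          _ ≤ 2^(e-i-1) := hmono (by omega)
      have hb : (2:ℤ)^((e-1)/2) ≤ 2^(e-i-1) := hmono (by omega)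
      have hc : (2:ℤ)^(e-i-1) + 2^(e-i-1) = 2^(e-i) := by
        have : e - i = (e-i-1) + 1 := by omega
        rw [this, pow_succ]; exact (two_mul _).symm.trans (mul_comm _ _)
      linarith
    have hp0 : (0:ℤ) < 2^((e-1)/2) := by positivity
    have habs : |(3:ℤ) * 2^i - 2^(e-i)| = 2^(e-i) - 3*2^i := by
      rw [abs_of_nonpos (by linarith)]; ring
    rw [habs]; linarith
  · by_cases h2 : 2*i + 2 = e
    · have hei : e - i = i + 2 := by omega
      have hm : (e-1)/2 = i := by omega
      rw [hei, hm]
      have : (3:ℤ)*2^i - 2^(i+2) = -2^i := by ring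
      rw [this, abs_neg, abs_of_nonneg (by positivity)]
    · by_cases h3 : 2*i + 1 = e
      · have hei : e - i = i + 1 := by omega
        have hm : (e-1)/2 = i := by omega
        rw [hei, hm]
        have : (3:ℤ)*2^i - 2^(i+1) = 2^i := by ring
        rw [this, abs_of_nonneg (by positivity)]
      · by_cases h4 : 2*i = e
        · have hei : e - i = i := by omega
          rw [hei]
          have : (3:ℤ)*2^i - 2^i = 2^(i+1) := by ring
          rw [this, abs_of_nonneg (by positivity)]
          exact hmono (by omega)
        · -- 2*i ≥ e + 1
          have h5 : e + 1 ≤ 2*i := by omega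
          have ha : (2:ℤ)^(e-i) ≤ 2^i := hmono (by omega)
          have hpos : (0:ℤ) < 2^i := by positivity
          have : (2:ℤ)^((e-1)/2) ≤ 2^i := hmono (by omega)
          rw [abs_of_nonneg (by linarith)]
          linarith


lemma divisor_form {e d : ℕ} (hd : d ∣ 2^e * 3) :
    ∃ i ≤ e, d = 2^i ∨ d = 3 * 2^i := by
  by_cases h3 : 3 ∣ d
  · obtain ⟨d', rfl⟩ := h3
    have hd' : d' ∣ 2^e := by
      have h := hd
      rw [mul_comm ((2:ℕ)^e) 3] at h
      exact (mul_dvd_mul_iff_left (by norm_num : (3:ℕ) ≠ 0)).mp h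
    obtain ⟨i, hi, rfl⟩ := (Nat.dvd_prime_pow Nat.prime_two).mp hd'
    exact ⟨i, hi, Or.inr rfl⟩
  · have hcop : Nat.Coprime d 3 :=
      ((Nat.Prime.coprime_iff_not_dvd Nat.prime_three).mpr h3).symm
    have : d ∣ 2^e := hcop.dvd_of_dvd_mul_right hd
    obtain ⟨i, hi, rfl⟩ := (Nat.dvd_prime_pow Nat.prime_two).mp this
    exact ⟨i, hi, Or.inl rfl⟩


lemma sInf_pow (e : ℕ) (he : 4 ≤ e) :
    sInf {v : ℕ | ∃ d : ℕ, d ∣ 2^e*3 ∧ 0 < d ∧ 1 < v ∧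
      (v : ℤ) = |(d : ℤ) - ((2^e*3 / d : ℕ) : ℤ)|} = 2^((e-1)/2) := by
  set m := (e-1)/2 with hm
  have hmem : (2:ℕ)^m ∈ {v : ℕ | ∃ d : ℕ, d ∣ 2^e*3 ∧ 0 < d ∧ 1 < v ∧
      (v : ℤ) = |(d : ℤ) - ((2^e*3 / d : ℕ) : ℤ)|} := by
    refine ⟨3 * 2^m, ?_, by positivity, ?_, ?_⟩
    · have : (2:ℕ)^e * 3 = 3 * 2^m * 2^(e-m) := by
        have hme : m + (e - m) = e := by omega
        rw [mul_comm, mul_assoc, ← pow_add, hme]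
      rw [this]; exact Dvd.intro _ rfl
    · exact Nat.one_lt_two_pow (by omega)
    · have hdiv : (2:ℕ)^e*3 / (3 * 2^m) = 2^(e-m) := by
        have : (2:ℕ)^e * 3 = 3 * 2^m * 2^(e-m) := by
          have hme : m + (e - m) = e := by omega
          rw [mul_comm, mul_assoc, ← pow_add, hme]
        rw [this, Nat.mul_div_cancel_left _ (by positivity)]
      rw [hdiv]
      push_cast
      rcases (by omega : e - m = m + 1 ∨ e - m = m + 2) with h | h <;> rw [h]
      · rw [abs_of_nonneg (by rw [pow_succ]; nlinarith [pow_pos (by norm_num : (0:ℤ)<2) m])]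
        rw [pow_succ]; ring
      · have : (3:ℤ) * 2^m - 2^(m+2) = -2^m := by ring
        rw [this, abs_neg, abs_of_nonneg (by positivity)]
  apply le_antisymm
  · exact Nat.sInf_le hmem
  · apply le_csInf ⟨_, hmem⟩
    rintro v ⟨d, hd, hdpos, hv1, heq⟩
    obtain ⟨i, hi, hcase | hcase⟩ := divisor_form hd
    · subst hcase
      have hdiv : (2:ℕ)^e*3 / 2^i = 3 * 2^(e-i) := by
        have : (2:ℕ)^e * 3 = 2^i * (3 * 2^(e-i)) := by
          have hme : i + (e - i) = e := by omega
          rw [mul_comm (3:ℕ), ← mul_assoc, ← pow_add, hme]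
        rw [this, Nat.mul_div_cancel_left _ (by positivity)]
      rw [hdiv] at heq
      have hk := key_ineq e (e-i) he (by omega)
      rw [(by omega : e - (e-i) = i)] at hk
      have : ((2:ℕ)^m : ℤ) ≤ (v : ℤ) := by
        rw [heq, abs_sub_comm]
        push_cast
        exact_mod_cast hk
      exact_mod_cast this
    · subst hcase
      have hdiv : (2:ℕ)^e*3 / (3 * 2^i) = 2^(e-i) := by
        have : (2:ℕ)^e * 3 = 3 * 2^i * 2^(e-i) := by
          have hme : i + (e - i) = e := by omega
          rw [mul_comm, mul_assoc, ← pow_add, hme]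
        rw [this, Nat.mul_div_cancel_left _ (by positivity)]
      rw [hdiv] at heq
      have hk := key_ineq e i he hi
      have : ((2:ℕ)^m : ℤ) ≤ (v : ℤ) := by
        rw [heq]; push_cast; exact_mod_cast hk
      exact_mod_cast this

lemma ceil_half (s : ℕ) : ⌈((s:ℚ))/2⌉ = (((s+1)/2 : ℕ) : ℤ) := by
  obtain ⟨q, hq⟩ : ∃ q : ℕ, q = (s+1)/2 := ⟨_, rfl⟩
  rw [← hq]
  have h1 : s ≤ q*2 := by omega
  have h2 : q*2 ≤ s+1 := by omega
  have c1 : ((s:ℚ)) ≤ (q:ℚ)*2 := by exact_mod_cast h1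
  have c2 : ((q:ℚ))*2 ≤ (s:ℚ)+1 := by exact_mod_cast h2
  apply le_antisymm
  · exact Int.ceil_le.mpr (by push_cast; linarith)
  · have : ((q:ℤ) - 1) < ⌈((s:ℚ))/2⌉ := Int.lt_ceil.mpr (by push_cast; linarith)
    omega

/-- Theorem: with `a 0 = 4`, `p n = a 0 ⋯ a (n-1)`,
`a n = min{ |d − p n / d| : d ∣ p n, |d − p n / d| > 1 }` for `n ≥ 1`,
`b 1 = 1` and `b n = ⌈(b 1 + ⋯ + b (n-1)) / 2⌉` for `n ≥ 2`,
one has `a n = 2 ^ b n` for all `n > 2`. -/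
theorem josephus_main
    (a b p : ℕ → ℕ)
    (hp : ∀ n, p n = ∏ k ∈ Finset.range n, a k)
    (ha0 : a 0 = 4)
    (ha : ∀ n, 1 ≤ n →
      a n = sInf {v : ℕ | ∃ d : ℕ, d ∣ p n ∧ 0 < d ∧ 1 < v ∧
        (v : ℤ) = |(d : ℤ) - ((p n / d : ℕ) : ℤ)|})
    (hb1 : b 1 = 1)
    (hb : ∀ n, 2 ≤ n →
      (b n : ℤ) = ⌈(∑ k ∈ Finset.Icc 1 (n - 1), (b k : ℚ)) / 2⌉) :
    ∀ n, 2 < n → a n = 2 ^ b n := by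
  -- b in nat terms
  have hbn : ∀ n, 2 ≤ n → b n = ((∑ k ∈ Finset.Icc 1 (n-1), b k) + 1)/2 := by
    intro n hn
    have h := hb n hn
    rw [show (∑ k ∈ Finset.Icc 1 (n - 1), ((b k : ℚ))) =
        (((∑ k ∈ Finset.Icc 1 (n-1), b k : ℕ)) : ℚ) by push_cast; rfl] at h
    rw [ceil_half] at h
    exact_mod_cast h
  have hb2 : b 2 = 1 := by
    have := hbn 2 le_rfl
    simpa [Finset.Icc_self, hb1] using this
  -- small values
  have hp1 : p 1 = 4 := by rw [hp, Finset.prod_range_one, ha0]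
  have ha1 : a 1 = 3 := by
    rw [ha 1 le_rfl, hp1]
    apply le_antisymm
    · apply Nat.sInf_le
      exact ⟨1, one_dvd _, one_pos, by norm_num, by norm_num⟩
    · refine le_csInf ⟨3, ⟨1, one_dvd _, one_pos, by norm_num, by norm_num⟩⟩ ?_
      rintro v ⟨d, hd, hdpos, hv1, heq⟩
      have hdle : d ≤ 4 := Nat.le_of_dvd (by norm_num) hd
      interval_cases d <;> revert hd heq <;> norm_num <;> omega
  have hp2 : p 2 = 12 := by
    rw [hp, Finset.prod_range_succ, Finset.prod_range_one, ha0, ha1]; norm_num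
  have ha2 : a 2 = 4 := by
    rw [ha 2 (by norm_num), hp2]
    apply le_antisymm
    · apply Nat.sInf_le
      exact ⟨2, by norm_num, by norm_num, by norm_num, by norm_num⟩
    · refine le_csInf ⟨4, ⟨2, by norm_num, by norm_num, by norm_num, by norm_num⟩⟩ ?_
      rintro v ⟨d, hd, hdpos, hv1, heq⟩
      have hdle : d ≤ 12 := Nat.le_of_dvd (by norm_num) hd
      interval_cases d <;> revert hd heq <;> norm_num <;> omega
  have hs3 : ∑ k ∈ Finset.Icc 1 2, b k = 2 := by
    rw [Finset.sum_Icc_succ_top (by norm_num : (1:ℕ) ≤ 2), Finset.Icc_self,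
      Finset.sum_singleton, hb1, hb2]
  have hs2 : ∀ n, 3 ≤ n → 2 ≤ ∑ k ∈ Finset.Icc 1 (n-1), b k := by
    intro n hn
    calc 2 = ∑ k ∈ Finset.Icc 1 2, b k := hs3.symm
      _ ≤ ∑ k ∈ Finset.Icc 1 (n-1), b k := by
          apply Finset.sum_le_sum_of_subset
          exact Finset.Icc_subset_Icc le_rfl (by omega)
  have hp3 : p 3 = 48 := by
    rw [hp, Finset.prod_range_succ, Finset.prod_range_succ, Finset.prod_range_one,
      ha0, ha1, ha2]; norm_num
  -- main induction on p
  have hP : ∀ n, 3 ≤ n → p n = 2^((∑ k ∈ Finset.Icc 1 (n-1), b k) + 2) * 3 := by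
    intro n hn
    induction n, hn using Nat.le_induction with
    | base => rw [hp3, hs3]; norm_num
    | succ n hn ih =>
      have hA : a n = 2 ^ b n := by
        rw [ha n (by omega), ih, sInf_pow _ (by have := hs2 n hn; omega)]
        congr 1
        have := hbn n (by omega)
        omega
      have hsum : ∑ k ∈ Finset.Icc 1 (n+1-1), b k =
          (∑ k ∈ Finset.Icc 1 (n-1), b k) + b n := by
        rw [show n+1-1 = (n-1)+1 by omega, Finset.sum_Icc_succ_top (by omega : 1 ≤ (n-1)+1),
          show (n-1)+1 = n by omega]
      rw [hp, Finset.prod_range_succ, ← hp, ih, hA, hsum]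
      ring
  -- conclude
  intro n hn
  have hA : a n = 2 ^ b n := by
    rw [ha n (by omega), hP n (by omega), sInf_pow _ (by have := hs2 n (by omega); omega)]
    congr 1
    have := hbn n (by omega)
    omega
  exact hA
end

section
/- For every integer k ≥ 1, δ(3·2^k) = 2^{⌈k/2⌉ − 1}, where δ(m) denotes the minimum of |d − m/d| taken over all positive divisors d of m. -/
/-- `delta m` is the smallest absolute value of a difference between
complementary divisors of `m`: the minimum of `|d - m / d|` over all
positive divisors `d` of `m`. -/
noncomputable def delta (m : ℕ) : ℕ :=
  sInf {v : ℕ | ∃ d : ℕ, d ∣ m ∧ 0 < d ∧ (v : ℤ) = |(d : ℤ) - ((m / d : ℕ) : ℤ)|}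

lemma key : ∀ k : ℕ, 1 ≤ k → ∀ i, i ≤ k →
    (2:ℤ) ^ ((k - 1) / 2) ≤ |(2:ℤ) ^ i - 3 * 2 ^ (k - i)| := by
  intro k
  induction k using Nat.strong_induction_on with
  | _ k ih =>
    intro hk i hi
    match k, hk, hi with
    | 1, _, hi => interval_cases i <;> decide
    | 2, _, hi => interval_cases i <;> decide
    | (n+3), _, hi =>
      match i, hi with
      | 0, _ =>
        have h1 : ((n+3-0-1)/2 : ℕ) ≤ n + 3 := by omega
        have h2 : (2:ℤ) ^ ((n+3-1)/2 : ℕ) ≤ 2 ^ (n+3) :=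
          pow_le_pow_right₀ (by norm_num) (by omega)
        have h3 : (2:ℤ) ^ (n+3) ≤ |(2:ℤ) ^ 0 - 3 * 2 ^ (n+3-0)| := by
          have hp : (1:ℤ) ≤ 2 ^ (n+3) := one_le_pow₀ (by norm_num)
          rw [abs_sub_comm, abs_of_nonneg (by push_cast; nlinarith)]
          simp only [Nat.sub_zero, pow_zero]
          nlinarith
        exact le_trans h2 h3
      | (j+1), hi =>
        rcases Nat.lt_or_ge (j+1) (n+3) with hlt | hge
        · -- 1 ≤ i < n+3 : use ih at n+1, j
          have hj : j ≤ n + 1 := by omega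
          have hih := ih (n+1) (by omega) (by omega) j hj
          have hsub : n + 3 - (j+1) = (n + 1 - j) + 1 := by omega
          have hsub2 : (n+3-1)/2 = (n+1-1)/2 + 1 := by omega
          rw [hsub, hsub2]
          have : (2:ℤ) ^ (j+1) - 3 * 2 ^ ((n+1-j)+1)
              = 2 * ((2:ℤ) ^ j - 3 * 2 ^ (n+1-j)) := by ring
          rw [this, abs_mul, abs_two, pow_succ]
          nlinarith [abs_nonneg ((2:ℤ) ^ j - 3 * 2 ^ (n+1-j))]
        · -- i = n+3
          have hj : j = n + 2 := by omega
          subst hj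
          have hz : n + 3 - (n + 2 + 1) = 0 := by omega
          rw [hz, pow_zero]
          have h2 : (2:ℤ) ^ ((n+3-1)/2 : ℕ) ≤ 2 ^ (n+2) :=
            pow_le_pow_right₀ (by norm_num) (by omega)
          have h3 : (3:ℤ) ≤ 2 ^ (n+2) := by
            calc (3:ℤ) ≤ 2^2 := by norm_num
            _ ≤ 2 ^ (n+2) := pow_le_pow_right₀ (by norm_num) (by omega)
          rw [abs_of_nonneg (by nlinarith [pow_le_pow_right₀ (show (1:ℤ) ≤ 2 by norm_num) (show n+2 ≤ n+2+1 by omega)])]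
          have h4 : (2:ℤ)^(n+3) = 2 * 2^(n+2) := by ring
          nlinarith

lemma mem_lemma (k : ℕ) (hk : 1 ≤ k) :
    (2 ^ ((k - 1) / 2) : ℕ) ∈
      {v : ℕ | ∃ d : ℕ, d ∣ 3 * 2 ^ k ∧ 0 < d ∧
        (v : ℤ) = |(d : ℤ) - ((3 * 2 ^ k / d : ℕ) : ℤ)|} := by
  rcases Nat.even_or_odd k with ⟨j, hj⟩ | ⟨j, hj⟩
  · -- k = 2j, j ≥ 1; d = 3 * 2^(j-1)
    have hj1 : 1 ≤ j := by omega
    obtain ⟨j, rfl⟩ : ∃ j', j = j' + 1 := ⟨j - 1, by omega⟩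
    subst hj
    refine ⟨3 * 2 ^ j, ?_, by positivity, ?_⟩
    · exact mul_dvd_mul_left 3 (pow_dvd_pow 2 (by omega))
    · have hdiv : 3 * 2 ^ (j + 1 + (j + 1)) / (3 * 2 ^ j) = 2 ^ (j + 2) := by
        have : 3 * 2 ^ (j + 1 + (j + 1)) = (3 * 2 ^ j) * 2 ^ (j + 2) := by
          rw [show j + 1 + (j + 1) = j + (j + 2) by omega, pow_add]; ring
        rw [this, Nat.mul_div_cancel_left _ (by positivity)]
      rw [hdiv]
      have he : ((j + 1) + (j + 1) - 1) / 2 = j := by omega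
      rw [he]
      push_cast
      rw [abs_of_nonpos (by
        have h4 : (2:ℤ) ^ (j + 2) = 4 * 2 ^ j := by ring
        nlinarith [pow_pos (show (0:ℤ) < 2 by norm_num) j])]
      ring
  · -- k = 2j+1; d = 2^(j+1)
    subst hj
    refine ⟨2 ^ (j + 1), dvd_mul_of_dvd_right (pow_dvd_pow 2 (by omega)) 3, by positivity, ?_⟩
    have hdiv : 3 * 2 ^ (2 * j + 1) / 2 ^ (j + 1) = 3 * 2 ^ j := by
      have : 3 * 2 ^ (2 * j + 1) = 2 ^ (j + 1) * (3 * 2 ^ j) := by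
        rw [show 2 * j + 1 = (j + 1) + j by omega, pow_add]; ring
      rw [this, Nat.mul_div_cancel_left _ (by positivity)]
    rw [hdiv]
    have he : (2 * j + 1 - 1) / 2 = j := by omega
    rw [he]
    push_cast
    rw [abs_of_nonpos (by
      have h4 : (2:ℤ) ^ (j + 1) = 2 * 2 ^ j := by ring
      nlinarith [pow_pos (show (0:ℤ) < 2 by norm_num) j])]
    ring

lemma delta_aux (k : ℕ) (hk : 1 ≤ k) :
    sInf {v : ℕ | ∃ d : ℕ, d ∣ 3 * 2 ^ k ∧ 0 < d ∧
        (v : ℤ) = |(d : ℤ) - ((3 * 2 ^ k / d : ℕ) : ℤ)|} = 2 ^ ((k + 1) / 2 - 1) := by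
  have hhalf : (k + 1) / 2 - 1 = (k - 1) / 2 := by omega
  rw [hhalf]
  have hmem := mem_lemma k hk
  apply le_antisymm (Nat.sInf_le hmem)
  apply le_csInf ⟨_, hmem⟩
  rintro b ⟨d, hd, hdpos, hb⟩
  obtain ⟨d1, d2, h1, h2, rfl⟩ := exists_dvd_and_dvd_of_dvd_mul hd
  obtain ⟨i, hik, rfl⟩ := (Nat.dvd_prime_pow Nat.prime_two).mp h2
  have h2k : (2:ℕ) ^ k = 2 ^ i * 2 ^ (k - i) := by
    rw [← pow_add]; congr 1; omega
  rcases (Nat.prime_three).eq_one_or_self_of_dvd d1 h1 with rfl | rfl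
  · -- d = 2^i
    have hdiv : 3 * 2 ^ k / 2 ^ i = 3 * 2 ^ (k - i) := by
      rw [h2k, show 3 * (2 ^ i * 2 ^ (k - i)) = 2 ^ i * (3 * 2 ^ (k - i)) by ring,
        Nat.mul_div_cancel_left _ (by positivity)]
    rw [one_mul, hdiv] at hb
    have hkey := key k hk i hik
    have : (2:ℤ) ^ ((k - 1) / 2) ≤ (b : ℤ) := by
      rw [hb]; push_cast at hkey ⊢; exact hkey
    exact_mod_cast this
  · -- d = 3 * 2^i
    have hdiv : 3 * 2 ^ k / (3 * 2 ^ i) = 2 ^ (k - i) := by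
      rw [h2k, show 3 * (2 ^ i * 2 ^ (k - i)) = (3 * 2 ^ i) * 2 ^ (k - i) by ring,
        Nat.mul_div_cancel_left _ (by positivity)]
    rw [hdiv] at hb
    have hkey := key k hk (k - i) (by omega)
    rw [show k - (k - i) = i by omega] at hkey
    have : (2:ℤ) ^ ((k - 1) / 2) ≤ (b : ℤ) := by
      rw [hb, abs_sub_comm]; push_cast at hkey ⊢; exact hkey
    exact_mod_cast this

/-- For every `k ≥ 1`, `δ(3 * 2 ^ k) = 2 ^ (⌈k / 2⌉ - 1)`. -/
theorem delta_three_mul_two_pow (k : ℕ) (hk : 1 ≤ k) :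
    delta (3 * 2 ^ k) = 2 ^ ((k + 1) / 2 - 1) := by
  rw [delta]
  exact delta_aux k hk
end
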